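/- Let H = (V,E) be a proper Eulerian hypergraph with incidence matrix M and let ᾱ and ᾱ' be two magic assignments of H. If c(ᾱ) − c(ᾱ') ∈ row(M), then b_{ᾱ}(H) = b_{ᾱ'}(H). -/

import Mathlib

open Matrix Finset

/-! ### Pauli matrices and observables -/

/-- The Pauli `X` matrix. -/
noncomputable def PX : Matrix (Fin 2) (Fin 2) ℂ := !![0, 1; 1, 0]

/-- The Pauli `Y` matrix. -/
noncomputable def PY : Matrix (Fin 2) (Fin 2) ℂ := !![0, -Complex.I; Complex.I, 0]

/-- The Pauli `Z` matrix. -/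
noncomputable def PZ : Matrix (Fin 2) (Fin 2) ℂ := !![1, 0; 0, -1]

/-- The Kronecker (tensor) product of `k` 2×2 matrices, realized as a matrix indexed by
`Fin k → Fin 2` (a type of cardinality `2^k`). -/
noncomputable def pauliTensor (k : ℕ) (P : Fin k → Matrix (Fin 2) (Fin 2) ℂ) :
    Matrix (Fin k → Fin 2) (Fin k → Fin 2) ℂ :=
  Matrix.of fun f g => ∏ i, P i (f i) (g i)

/-- A `k`-qubit Pauli observable: `ε · (P₁ ⊗ ⋯ ⊗ P_k)` with `ε ∈ {1,-1}` and each
`P_i ∈ {I, X, Y, Z}`. -/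
def IsPauliObservable {k : ℕ} (A : Matrix (Fin k → Fin 2) (Fin k → Fin 2) ℂ) : Prop :=
  ∃ (ε : ℂ) (P : Fin k → Matrix (Fin 2) (Fin 2) ℂ),
    (ε = 1 ∨ ε = -1) ∧ (∀ i, P i = 1 ∨ P i = PX ∨ P i = PY ∨ P i = PZ) ∧
    A = ε • pauliTensor k P

/-! ### Hypergraphs -/

/-- Product of the observables assigned to the vertices of a hyperedge (taken in increasing
order of the vertices; for commuting observables this is the product in any order). -/
noncomputable def edgeProd {V n : Type*} [LinearOrder V] [Fintype n] [DecidableEq n]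
    (α : V → Matrix n n ℂ) (e : Finset V) : Matrix n n ℂ :=
  ((e.sort (· ≤ ·)).map α).prod

/-- A proper Eulerian hypergraph: each vertex lies in an even number of hyperedges, there are
no isolated vertices, no empty hyperedges, and all hyperedges are distinct. -/
def ProperEulerian {V E : Type*} [DecidableEq V] [Fintype E] (edge : E → Finset V) : Prop :=
  (∀ v : V, Even (Finset.univ.filter (fun e : E => v ∈ edge e)).card) ∧
  (∀ v : V, ∃ e : E, v ∈ edge e) ∧
  (∀ e : E, (edge e).Nonempty) ∧
  Function.Injective edge

/-- A valid Gram matrix for a hypergraph. -/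
def IsValidGram {V E : Type*} (edge : E → Finset V) (M : Matrix V V (ZMod 2)) : Prop :=
  M.IsSymm ∧ (∀ v, M v v = 0) ∧
  (∀ e : E, ∀ u ∈ edge e, ∀ v ∈ edge e, M u v = 0) ∧
  (∀ e : E, ∀ v : V, ∑ u ∈ edge e, M u v = 0)

/-- The concatenated list of vertices of the hyperedges, each hyperedge's vertices listed in
increasing order, hyperedges enumerated by the list `le`. -/
def vertexList {V E : Type*} [LinearOrder V] (edge : E → Finset V) (le : List E) : List V :=
  (le.map fun e => (edge e).sort (· ≤ ·)).flatten

/-- The inversion sum `s(M) = ∑_{i<j, L_i > L_j} M_{L_i, L_j}`. -/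
def inversionSum {V : Type*} [LinearOrder V] (M : Matrix V V (ZMod 2)) (L : List V) : ZMod 2 :=
  ∑ i : Fin L.length, ∑ j : Fin L.length,
    if i < j ∧ L.get j < L.get i then M (L.get i) (L.get j) else 0

/-- A magic Gram matrix: a valid Gram matrix with inversion sum 1. -/
def MagicGram {V E : Type*} [LinearOrder V] (edge : E → Finset V) (le : List E)
    (M : Matrix V V (ZMod 2)) : Prop :=
  IsValidGram edge M ∧ inversionSum M (vertexList edge le) = 1

/-- A `k`-qubit Pauli-based magic assignment of a hypergraph. -/
def IsPauliMagicAssignment {V E : Type*} [LinearOrder V] [Fintype E] (k : ℕ)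
    (edge : E → Finset V) (α : V → Matrix (Fin k → Fin 2) (Fin k → Fin 2) ℂ) : Prop :=
  (∀ v, IsPauliObservable (α v)) ∧
  (∀ e : E, ∀ u ∈ edge e, ∀ w ∈ edge e, Commute (α u) (α w)) ∧
  (∀ e : E, edgeProd α (edge e) = 1 ∨ edgeProd α (edge e) = -1) ∧
  Odd (Nat.card {e : E // edgeProd α (edge e) = -1})

/-- A magic assignment of a hypergraph by Hermitian matrices squaring to the identity. -/
def IsMagicAssignment {V E n : Type*} [LinearOrder V] [Fintype E] [Fintype n] [DecidableEq n]
    (edge : E → Finset V) (α : V → Matrix n n ℂ) : Prop :=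
  (∀ v, (α v).IsHermitian) ∧ (∀ v, α v * α v = 1) ∧
  (∀ e : E, ∀ u ∈ edge e, ∀ w ∈ edge e, Commute (α u) (α w)) ∧
  (∀ e : E, edgeProd α (edge e) = 1 ∨ edgeProd α (edge e) = -1) ∧
  Odd (Nat.card {e : E // edgeProd α (edge e) = -1})

open scoped Classical in
/-- The sign vector `c(α) ∈ (ZMod 2)^E` of an assignment: `0` on hyperedges with product `+I`,
`1` on the others. -/
noncomputable def cvec {V E n : Type*} [LinearOrder V] [Fintype E] [Fintype n] [DecidableEq n]
    (edge : E → Finset V) (α : V → Matrix n n ℂ) : E → ZMod 2 :=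
  fun e => if edgeProd α (edge e) = 1 then 0 else 1

/-- The incidence matrix of a hypergraph. -/
def incMatrix {V E : Type*} [DecidableEq V] (edge : E → Finset V) : Matrix V E (ZMod 2) :=
  Matrix.of fun v e => if v ∈ edge e then 1 else 0

/-- Hamming weight of a vector over `ZMod 2`. -/
def hWeight {E : Type*} [Fintype E] (y : E → ZMod 2) : ℕ :=
  (Finset.univ.filter fun e => y e ≠ 0).card

/-- The symplectic product on `(ZMod 2)^{2k}` (coordinates indexed by `Fin k ⊕ Fin k`). -/
def sympl (k : ℕ) (s t : Fin k ⊕ Fin k → ZMod 2) : ZMod 2 :=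
  ∑ i : Fin k, (s (Sum.inl i) * t (Sum.inr i) + s (Sum.inr i) * t (Sum.inl i))


def sgnZ (z : ZMod 2) : ℤ := (-1) ^ z.val

lemma sgnZ_zero : sgnZ 0 = 1 := by decide

lemma sgnZ_add (a b : ZMod 2) : sgnZ (a + b) = sgnZ a * sgnZ b := by revert a b; decide

lemma sgnZ_key (a b : ZMod 2) : sgnZ a * sgnZ (a - b) = sgnZ b := by revert a b; decide

lemma sgnZ_pm (a : ZMod 2) : sgnZ a = 1 ∨ sgnZ a = -1 := by revert a; decide

lemma sgnZ_sq (a : ZMod 2) : sgnZ a * sgnZ a = 1 := by revert a; decide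

/-- If two magic assignments of a proper Eulerian hypergraph have sign
vectors differing by an element of the row space of the incidence matrix, then they have the
same noncontextual bound. -/
theorem stmt13 {V E : Type*} [Fintype V] [LinearOrder V] [Fintype E]
    (edge : E → Finset V) (hH : ProperEulerian edge)
    (d d' : ℕ) (hd : 1 ≤ d) (hd' : 1 ≤ d')
    (α : V → Matrix (Fin d) (Fin d) ℂ) (α' : V → Matrix (Fin d') (Fin d') ℂ)
    (hα : IsMagicAssignment edge α) (hα' : IsMagicAssignment edge α')
    (hrow : ∃ x : V → ZMod 2,
      cvec edge α - cvec edge α' = Matrix.vecMul x (incMatrix edge)) :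
    ∀ b b' : ℤ,
      IsGreatest {x : ℤ | ∃ a : V → ℤ, (∀ v, a v = 1 ∨ a v = -1) ∧
        x = ∑ e : E, (-1 : ℤ) ^ (cvec edge α e).val * ∏ v ∈ edge e, a v} b →
      IsGreatest {x : ℤ | ∃ a : V → ℤ, (∀ v, a v = 1 ∨ a v = -1) ∧
        x = ∑ e : E, (-1 : ℤ) ^ (cvec edge α' e).val * ∏ v ∈ edge e, a v} b' →
      b = b' := by
  intro b b' hb hb'
  obtain ⟨x, hx⟩ := hrow
  set c := cvec edge α with hc
  set c' := cvec edge α' with hc'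
  have hsum : ∀ e : E, (∑ v ∈ edge e, x v : ZMod 2) = c e - c' e := by
    intro e
    have h := congrFun hx e
    simp only [Pi.sub_apply, Matrix.vecMul, dotProduct, incMatrix, Matrix.of_apply,
      mul_ite, mul_one, mul_zero] at h
    rw [h, Finset.sum_ite_mem, Finset.univ_inter]
  have hp : ∀ s : Finset V, ∏ v ∈ s, sgnZ (x v) = sgnZ (∑ v ∈ s, x v) := by
    intro s
    induction s using Finset.induction with
    | empty => simp [sgnZ_zero]
    | insert _ _ h ih =>
      rw [Finset.prod_insert h, Finset.sum_insert h, ih, sgnZ_add]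
  have main : ∀ a : V → ℤ,
      ∑ e : E, (-1 : ℤ) ^ (c e).val * ∏ v ∈ edge e, (a v * sgnZ (x v))
        = ∑ e : E, (-1 : ℤ) ^ (c' e).val * ∏ v ∈ edge e, a v := by
    intro a
    refine Finset.sum_congr rfl fun e _ => ?_
    rw [Finset.prod_mul_distrib, hp, hsum e]
    show sgnZ (c e) * ((∏ v ∈ edge e, a v) * sgnZ (c e - c' e)) = sgnZ (c' e) * _
    rw [mul_comm (∏ v ∈ edge e, a v), ← mul_assoc, sgnZ_key]
  have hset : {x : ℤ | ∃ a : V → ℤ, (∀ v, a v = 1 ∨ a v = -1) ∧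
        x = ∑ e : E, (-1 : ℤ) ^ (c e).val * ∏ v ∈ edge e, a v}
      = {x : ℤ | ∃ a : V → ℤ, (∀ v, a v = 1 ∨ a v = -1) ∧
        x = ∑ e : E, (-1 : ℤ) ^ (c' e).val * ∏ v ∈ edge e, a v} := by
    ext y
    constructor
    · rintro ⟨a, ha, rfl⟩
      refine ⟨fun v => a v * sgnZ (x v), fun v => ?_, ?_⟩
      · rcases ha v with h1 | h1 <;> rcases sgnZ_pm (x v) with h2 | h2 <;>
          simp [h1, h2]
      · rw [← main (fun v => a v * sgnZ (x v))]
        refine Finset.sum_congr rfl fun e _ => ?_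
        congr 1
        refine Finset.prod_congr rfl fun v _ => ?_
        rw [mul_assoc, sgnZ_sq, mul_one]
    · rintro ⟨a, ha, rfl⟩
      refine ⟨fun v => a v * sgnZ (x v), fun v => ?_, ?_⟩
      · rcases ha v with h1 | h1 <;> rcases sgnZ_pm (x v) with h2 | h2 <;>
          simp [h1, h2]
      · exact (main a).symm
  rw [hset] at hb
  exact hb.unique hb'
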